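/- The Galois numbers G_n = Σ_{k=0}^n C(n,k)_q satisfy the recursion G_{n+1} = 2G_n + (q^n - 1)G_{n-1}, with G_0 = 1 and G_1 = 2. -/

import Mathlib

/-- `(q)_n = (1-q)(1-q^2)⋯(1-q^n)`, with `(q)_0 = 1`. -/
noncomputable def qPoch {K : Type*} [Field K] (q : K) (n : ℕ) : K :=
  ∏ j ∈ Finset.range n, (1 - q ^ (j + 1))

/-- The q-binomial coefficient `C(n,k)_q = (q)_n / ((q)_k (q)_{n-k})`. -/
noncomputable def qBinom {K : Type*} [Field K] (q : K) (n k : ℕ) : K :=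
  qPoch q n / (qPoch q k * qPoch q (n - k))

/-- The Galois number `G_n = Σ_{k=0}^n C(n,k)_q`. -/
noncomputable def galoisNumber {K : Type*} [Field K] (q : K) (n : ℕ) : K :=
  ∑ k ∈ Finset.range (n + 1), qBinom q n k

namespace GaloisAux

variable {K : Type*} [Field K]

/-- q-binomial with parts `a`, `b` (so `n = a + b`, `k = a`). -/
noncomputable def B (q : K) (a b : ℕ) : K := qPoch q (a + b) / (qPoch q a * qPoch q b)

lemma qPoch_succ (q : K) (n : ℕ) : qPoch q (n + 1) = qPoch q n * (1 - q ^ (n + 1)) :=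
  Finset.prod_range_succ _ _

lemma qPoch_zero (q : K) : qPoch q 0 = 1 := rfl

variable {q : K} (hq : ∀ m : ℕ, 0 < m → (1 : K) - q ^ m ≠ 0)
include hq

lemma qPoch_ne_zero (n : ℕ) : qPoch q n ≠ 0 :=
  Finset.prod_ne_zero_iff.2 fun j _ => hq (j + 1) (Nat.succ_pos j)

lemma B_zero_left (b : ℕ) : B q 0 b = 1 := by
  simp [B, qPoch_zero, div_self (qPoch_ne_zero hq b)]

lemma B_zero_right (a : ℕ) : B q a 0 = 1 := by
  simp [B, qPoch_zero, div_self (qPoch_ne_zero hq a)]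

lemma absorb (a b : ℕ) :
    (1 - q ^ (a + 1)) * B q (a + 1) b = (1 - q ^ (a + b + 1)) * B q a b := by
  have h1 := qPoch_ne_zero hq a
  have h2 := qPoch_ne_zero hq b
  have h3 := qPoch_ne_zero hq (a + b)
  have h4 := hq (a + 1) (by omega)
  unfold B
  rw [show a + 1 + b = a + b + 1 by ring, qPoch_succ q (a + b), qPoch_succ q a]
  field_simp

lemma pascal (a b : ℕ) :
    B q (a + 1) (b + 1) = q ^ (a + 1) * B q (a + 1) b + B q a (b + 1) := by
  have h1 := qPoch_ne_zero hq a
  have h2 := qPoch_ne_zero hq b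
  have h3 := qPoch_ne_zero hq (a + b)
  have h4 := hq (a + 1) (by omega)
  have h5 := hq (b + 1) (by omega)
  have h6 := hq (a + b + 1) (by omega)
  have h7 := hq (a + b + 2) (by omega)
  unfold B
  rw [show a + 1 + (b + 1) = a + b + 1 + 1 by ring, show a + 1 + b = a + b + 1 by ring,
      show a + (b + 1) = a + b + 1 by ring, qPoch_succ q (a + b + 1), qPoch_succ q (a + b),
      qPoch_succ q a, qPoch_succ q b]
  field_simp
  ring

noncomputable def S (q : K) (n : ℕ) : K := ∑ k ∈ Finset.range (n + 1), B q k (n - k)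
noncomputable def T (q : K) (n : ℕ) : K := ∑ k ∈ Finset.range (n + 1), q ^ k * B q k (n - k)

omit hq in
lemma galois_eq_S (n : ℕ) : galoisNumber q n = S q n := by
  unfold galoisNumber S
  refine Finset.sum_congr rfl fun k hk => ?_
  rw [Finset.mem_range] at hk
  unfold qBinom B
  rw [Nat.add_sub_cancel' (by omega : k ≤ n)]

lemma T_peel (m : ℕ) :
    T q (m + 1) = 1 + ∑ k ∈ Finset.range (m + 1), q ^ (k + 1) * B q (k + 1) (m - k) := by
  unfold T
  rw [Finset.sum_range_succ']
  simp [B_zero_left hq, Nat.succ_sub_succ, add_comm]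

lemma S_peel (m : ℕ) :
    S q (m + 1) = 1 + ∑ k ∈ Finset.range (m + 1), B q (k + 1) (m - k) := by
  unfold S
  rw [Finset.sum_range_succ']
  simp [B_zero_left hq, Nat.succ_sub_succ, add_comm]

lemma T_eq (m : ℕ) : T q (m + 1) = S q (m + 1) + (q ^ (m + 1) - 1) * S q m := by
  have hpt : ∀ k ∈ Finset.range (m + 1), q ^ (k + 1) * B q (k + 1) (m - k)
      = B q (k + 1) (m - k) + (q ^ (m + 1) - 1) * B q k (m - k) := by
    intro k hk
    rw [Finset.mem_range] at hk
    have h := absorb hq k (m - k)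
    rw [show k + (m - k) + 1 = m + 1 by omega] at h
    linear_combination -h
  rw [T_peel hq, Finset.sum_congr rfl hpt, Finset.sum_add_distrib, ← Finset.mul_sum,
      S_peel hq]
  unfold S
  ring

lemma S_succ (m : ℕ) : S q (m + 2) = S q (m + 1) + T q (m + 1) := by
  have hpt : ∀ k ∈ Finset.range (m + 1), B q (k + 1) (m + 1 - k)
      = q ^ (k + 1) * B q (k + 1) (m - k) + B q k (m + 1 - k) := by
    intro k hk
    rw [Finset.mem_range] at hk
    have h : m + 1 - k = (m - k) + 1 := by omega
    rw [h, pascal hq k (m - k), ← h]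
  have e1 : S q (m + 2)
      = 1 + ((∑ k ∈ Finset.range (m + 1), B q (k + 1) (m + 1 - k)) + 1) := by
    unfold S
    rw [Finset.sum_range_succ']
    simp only [Nat.succ_sub_succ, Nat.sub_zero]
    rw [Finset.sum_range_succ]
    simp only [Nat.sub_self]
    rw [B_zero_left hq, B_zero_right hq]
    ring
  rw [e1, Finset.sum_congr rfl hpt, Finset.sum_add_distrib, T_peel hq]
  have e2 : S q (m + 1)
      = (∑ k ∈ Finset.range (m + 1), B q k (m + 1 - k)) + 1 := by
    unfold S
    rw [Finset.sum_range_succ]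
    simp only [Nat.sub_self]
    rw [B_zero_right hq]
  rw [e2]
  ring

end GaloisAux

/-- `G_{n+1} = 2 G_n + (q^n - 1) G_{n-1}` for `n ≥ 1`, with `G_0 = 1`, `G_1 = 2`. -/
theorem galoisNumber_recursion :
    galoisNumber (RatFunc.X : RatFunc ℚ) 0 = 1 ∧
    galoisNumber (RatFunc.X : RatFunc ℚ) 1 = 2 ∧
    ∀ n : ℕ, 1 ≤ n →
      galoisNumber (RatFunc.X : RatFunc ℚ) (n + 1) =
        2 * galoisNumber (RatFunc.X : RatFunc ℚ) n +
          ((RatFunc.X : RatFunc ℚ) ^ n - 1) * galoisNumber (RatFunc.X : RatFunc ℚ) (n - 1) := by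
  have hq : ∀ m : ℕ, 0 < m → (1 : RatFunc ℚ) - (RatFunc.X : RatFunc ℚ) ^ m ≠ 0 := by
    intro m hm h
    have hx : (RatFunc.X : RatFunc ℚ) ^ m = 1 := by linear_combination -h
    have hp : (Polynomial.X : Polynomial ℚ) ^ m = 1 := by
      apply RatFunc.algebraMap_injective ℚ
      rw [map_pow, map_one, RatFunc.algebraMap_X]
      exact hx
    have := congrArg Polynomial.natDegree hp
    simp [Polynomial.natDegree_X_pow] at this
    omega
  refine ⟨?_, ?_, ?_⟩
  · simp [galoisNumber, qBinom, qPoch]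
  · have h1 : qPoch (RatFunc.X : RatFunc ℚ) 1 ≠ 0 := GaloisAux.qPoch_ne_zero hq 1
    norm_num [galoisNumber, qBinom, Finset.sum_range_succ, GaloisAux.qPoch_zero,
      div_self h1]
  · rintro n hn
    obtain ⟨m, rfl⟩ : ∃ m, n = m + 1 := ⟨n - 1, by omega⟩
    rw [GaloisAux.galois_eq_S, GaloisAux.galois_eq_S, GaloisAux.galois_eq_S,
        Nat.add_sub_cancel, show m + 1 + 1 = m + 2 from rfl,
        GaloisAux.S_succ hq m, GaloisAux.T_eq hq m]
    ring
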